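/- Let n ≥ 2, α ∈ (0,1), and let p = (1/n,…,1/n) be the uniform probability vector. Set κ := n(1−α), k := ⌊κ⌋, and C_{α,n} := √( n(k + (κ − k)²) − κ² ) / κ. Then for every f ∈ ℝⁿ, CVaR_{p,α}(f) − E_p(f) ≤ C_{α,n} · √(V_p(f)), and the inequality is tight: there exists a nonconstant f ∈ ℝⁿ attaining equality. -/

import Mathlib

lemma fract_lemma {ι : Type*} (s : Finset ι) (a : ι → ℝ)
    (h : ∀ i ∈ s, 0 ≤ a i ∧ a i ≤ 1) :
    Int.fract (∑ i ∈ s, a i) * (1 - Int.fract (∑ i ∈ s, a i)) ≤ ∑ i ∈ s, a i * (1 - a i) := by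
  induction s using Finset.cons_induction with
  | empty => simp
  | cons i s his ih =>
    rw [Finset.sum_cons, Finset.sum_cons]
    obtain ⟨h0, h1⟩ := h i (Finset.mem_cons_self i s)
    have ih' := ih (fun j hj => h j (Finset.mem_cons_of_mem hj))
    set b := ∑ j ∈ s, a j with hb
    have hu0 : 0 ≤ Int.fract b := Int.fract_nonneg b
    have hu1 : Int.fract b < 1 := Int.fract_lt_one b
    have key : Int.fract (a i + b) = Int.fract (a i + Int.fract b) := by
      have : a i + b = (a i + Int.fract b) + (⌊b⌋ : ℤ) := by
        have := Int.self_sub_floor b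
        push_cast at this ⊢
        linarith
      rw [this, Int.fract_add_intCast]
    rw [key]
    rcases lt_or_ge (a i + Int.fract b) 1 with hlt | hge
    · rw [Int.fract_eq_self.mpr ⟨by linarith, hlt⟩]
      nlinarith [mul_nonneg h0 hu0]
    · have heq : Int.fract (a i + Int.fract b) = a i + Int.fract b - 1 := by
        have h2 : a i + Int.fract b = (a i + Int.fract b - 1) + ((1 : ℤ) : ℝ) := by push_cast; ring
        rw [h2, Int.fract_add_intCast, Int.fract_eq_self.mpr ⟨by linarith, by linarith⟩]; push_cast; ring
      rw [heq]
      nlinarith [mul_nonneg (by linarith : (0:ℝ) ≤ 1 - a i) (by linarith : (0:ℝ) ≤ 1 - Int.fract b)]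
lemma sumsq_le (n : ℕ) (κ : ℝ) (hκ : 0 < κ) (q : Fin n → ℝ)
    (hq1 : ∑ i, q i = 1) (hq0 : ∀ i, 0 ≤ q i) (hqc : ∀ i, q i ≤ 1 / κ) :
    ∑ i, q i ^ 2 ≤ ((⌊κ⌋ : ℝ) + Int.fract κ ^ 2) / κ ^ 2 := by
  have h := fract_lemma Finset.univ (fun i => κ * q i) (fun i _ => by
    refine ⟨mul_nonneg hκ.le (hq0 i), ?_⟩
    rw [← le_div_iff₀' hκ]
    exact hqc i)
  have hs : ∑ i, κ * q i = κ := by rw [← Finset.mul_sum, hq1, mul_one]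
  rw [hs] at h
  have expand : ∑ i, κ * q i * (1 - κ * q i) = κ - κ ^ 2 * ∑ i, q i ^ 2 := by
    have : ∀ i ∈ Finset.univ, κ * q i * (1 - κ * q i) = κ * q i - κ ^ 2 * q i ^ 2 :=
      fun i _ => by ring
    rw [Finset.sum_congr rfl this, Finset.sum_sub_distrib, ← Finset.mul_sum, ← Finset.mul_sum,
      hq1, mul_one]
  rw [expand] at h
  have hfr : Int.fract κ = κ - ⌊κ⌋ := (Int.self_sub_floor κ).symm
  rw [le_div_iff₀ (by positivity : (0:ℝ) < κ ^ 2)]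
  nlinarith [h]
lemma core (n : ℕ) (hn : 0 < n) (κ : ℝ) (hκ : 0 < κ) (q f : Fin n → ℝ)
    (hq1 : ∑ i, q i = 1) (hq0 : ∀ i, 0 ≤ q i) (hqc : ∀ i, q i ≤ 1 / κ) :
    ∑ i, q i * f i ≤ (∑ i, 1 / (n : ℝ) * f i) +
      Real.sqrt ((n : ℝ) * ((⌊κ⌋ : ℝ) + Int.fract κ ^ 2) - κ ^ 2) / κ *
        Real.sqrt (∑ i, 1 / (n : ℝ) * (f i - ∑ j, 1 / (n : ℝ) * f j) ^ 2) := by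
  have hN : (0:ℝ) < n := by exact_mod_cast hn
  set N := (n : ℝ) with hNdef
  set μ := ∑ j, 1 / N * f j with hμ
  have hcard : ∑ _i : Fin n, (1:ℝ) = N := by simp [Finset.card_univ, hNdef]
  have hμ' : μ = 1 / N * ∑ j, f j := by rw [hμ, Finset.mul_sum]
  have key : ∑ i, q i * f i - μ = ∑ i, (q i - 1 / N) * (f i - μ) := by
    have e : ∀ i ∈ Finset.univ, (q i - 1/N) * (f i - μ)
        = (q i * f i - μ * q i - 1/N * f i) + (1/N * μ) * 1 := fun i _ => by ring
    rw [Finset.sum_congr rfl e, Finset.sum_add_distrib, Finset.sum_sub_distrib,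
      Finset.sum_sub_distrib, ← Finset.mul_sum, ← Finset.mul_sum, ← Finset.mul_sum,
      hq1, hcard, hμ']
    field_simp
    ring
  set A := ∑ i, (q i - 1 / N) ^ 2 with hA
  set B := ∑ i, (f i - μ) ^ 2 with hB
  have hB0 : 0 ≤ B := Finset.sum_nonneg fun i _ => sq_nonneg _
  have hA0 : 0 ≤ A := Finset.sum_nonneg fun i _ => sq_nonneg _
  have cs : (∑ i, (q i - 1/N) * (f i - μ)) ^ 2 ≤ A * B := by
    exact Finset.sum_mul_sq_le_sq_mul_sq Finset.univ (fun i => q i - 1/N) (fun i => f i - μ)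
  set D := N * ((⌊κ⌋ : ℝ) + Int.fract κ ^ 2) - κ ^ 2 with hD
  have hAle : A ≤ D / (N * κ ^ 2) := by
    have hsq := sumsq_le n κ hκ q hq1 hq0 hqc
    have hexp : A = (∑ i, q i ^ 2) - 1 / N := by
      have e : ∀ i ∈ Finset.univ, (q i - 1/N) ^ 2
          = q i ^ 2 - 2/N * q i + (1/N)^2 * 1 := fun i _ => by ring
      rw [hA, Finset.sum_congr rfl e, Finset.sum_add_distrib, Finset.sum_sub_distrib,
        ← Finset.mul_sum, ← Finset.mul_sum, hq1, hcard]
      field_simp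
      ring
    have h2 : D / (N * κ ^ 2) = ((⌊κ⌋:ℝ) + Int.fract κ ^ 2)/κ^2 - 1/N := by
      field_simp
      ring
    rw [hexp, h2]
    linarith
  have hD0 : 0 ≤ D := by
    by_contra hneg
    push_neg at hneg
    have : D / (N * κ ^ 2) < 0 := div_neg_of_neg_of_pos hneg (by positivity)
    linarith
  have step1 : ∑ i, q i * f i - μ ≤ Real.sqrt (A * B) := by
    rw [key]
    calc ∑ i, (q i - 1/N) * (f i - μ) ≤ |∑ i, (q i - 1/N) * (f i - μ)| := le_abs_self _
      _ = Real.sqrt ((∑ i, (q i - 1/N) * (f i - μ)) ^ 2) := (Real.sqrt_sq_eq_abs _).symm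
      _ ≤ Real.sqrt (A * B) := Real.sqrt_le_sqrt cs
  have step2 : Real.sqrt (A * B) ≤ Real.sqrt (D / (N * κ^2) * B) :=
    Real.sqrt_le_sqrt (mul_le_mul_of_nonneg_right hAle hB0)
  have step3 : Real.sqrt (D / (N * κ^2) * B)
      = Real.sqrt D / κ * Real.sqrt (∑ i, 1/N * (f i - μ) ^ 2) := by
    have h1 : ∑ i, 1/N * (f i - μ) ^ 2 = 1/N * B := by rw [hB, Finset.mul_sum]
    rw [h1, Real.sqrt_mul (by positivity) B, Real.sqrt_mul (by positivity : (0:ℝ) ≤ 1/N) B]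
    have h2 : Real.sqrt (D/(N*κ^2)) = Real.sqrt D / κ * Real.sqrt (1/N) := by
      rw [show D/(N*κ^2) = D * (1/N) / κ^2 by ring, Real.sqrt_div (by positivity),
        Real.sqrt_mul hD0, Real.sqrt_sq hκ.le]
      ring
    rw [h2]; ring
  have := step1.trans (step2.trans_eq step3)
  linarith
noncomputable def qst (n : ℕ) (κ : ℝ) : Fin n → ℝ := fun i =>
  if (i : ℕ) < (⌊κ⌋).toNat then 1 / κ
  else if (i : ℕ) = (⌊κ⌋).toNat then Int.fract κ / κ else 0

lemma sum_ite_aux (n m : ℕ) (hm : m < n) (x y : ℝ) :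
    (∑ i : Fin n, if (i : ℕ) < m then x else if (i : ℕ) = m then y else 0)
      = m * x + y := by
  rw [Fin.sum_univ_eq_sum_range (fun j => if j < m then x else if j = m then y else 0) n]
  rw [← Finset.sum_subset (Finset.range_subset_range.mpr hm)
    (fun j _ hj => by
      rw [Finset.mem_range, not_lt] at hj
      have h1 : ¬ j < m := by omega
      have h2 : ¬ j = m := by omega
      simp [h1, h2])]
  rw [Finset.sum_range_succ]
  have h3 : (∑ j ∈ Finset.range m, if j < m then x else if j = m then y else 0)
      = ∑ _j ∈ Finset.range m, x := by
    refine Finset.sum_congr rfl fun j hj => ?_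
    rw [Finset.mem_range] at hj
    simp [hj]
  rw [h3, Finset.sum_const, Finset.card_range]
  simp [lt_irrefl]
  try ring
lemma qst_floor_lt (n : ℕ) (κ : ℝ) (hκ0 : 0 < κ) (hκn : κ < n) : (⌊κ⌋).toNat < n := by
  have h1 : ⌊κ⌋ < (n : ℤ) := by
    rw [Int.floor_lt]
    exact_mod_cast hκn
  have h0 : 0 ≤ ⌊κ⌋ := Int.floor_nonneg.mpr hκ0.le
  omega

lemma qst_cast (κ : ℝ) (hκ0 : 0 < κ) : (((⌊κ⌋).toNat : ℤ) : ℝ) = ((⌊κ⌋ : ℤ) : ℝ) := by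
  rw [Int.toNat_of_nonneg (Int.floor_nonneg.mpr hκ0.le)]

lemma qst_sum (n : ℕ) (κ : ℝ) (hκ0 : 0 < κ) (hκn : κ < n) :
    ∑ i, qst n κ i = 1 := by
  unfold qst
  rw [sum_ite_aux n _ (qst_floor_lt n κ hκ0 hκn)]
  have hc : ((⌊κ⌋).toNat : ℝ) = (⌊κ⌋ : ℝ) := by exact_mod_cast qst_cast κ hκ0
  have hfr : Int.fract κ = κ - ⌊κ⌋ := (Int.self_sub_floor κ).symm
  rw [hc, hfr]
  field_simp
  ring

lemma qst_sumsq (n : ℕ) (κ : ℝ) (hκ0 : 0 < κ) (hκn : κ < n) :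
    ∑ i, (qst n κ i) ^ 2 = ((⌊κ⌋ : ℝ) + Int.fract κ ^ 2) / κ ^ 2 := by
  have e : ∀ i ∈ Finset.univ, (qst n κ i) ^ 2
      = if (i : ℕ) < (⌊κ⌋).toNat then (1/κ)^2
        else if (i : ℕ) = (⌊κ⌋).toNat then (Int.fract κ / κ)^2 else 0 := by
    intro i _
    unfold qst
    split_ifs <;> simp
  rw [Finset.sum_congr rfl e, sum_ite_aux n _ (qst_floor_lt n κ hκ0 hκn)]
  have hc : ((⌊κ⌋).toNat : ℝ) = (⌊κ⌋ : ℝ) := by exact_mod_cast qst_cast κ hκ0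
  rw [hc]
  field_simp
  try ring

lemma qst_nonneg (n : ℕ) (κ : ℝ) (hκ0 : 0 < κ) (i : Fin n) : 0 ≤ qst n κ i := by
  unfold qst
  have := Int.fract_nonneg κ
  split_ifs <;> positivity

lemma qst_le (n : ℕ) (κ : ℝ) (hκ0 : 0 < κ) (i : Fin n) : qst n κ i ≤ 1 / κ := by
  unfold qst
  have h1 := Int.fract_lt_one κ
  have h2 := Int.fract_nonneg κ
  split_ifs
  · exact le_refl _
  · exact (div_le_div_iff_of_pos_right hκ0).mpr h1.le
  · positivity
lemma qst_ne (n : ℕ) (hn : 2 ≤ n) (κ : ℝ) (hκ0 : 0 < κ) (hκn : κ < n) :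
    qst n κ ⟨0, by omega⟩ ≠ qst n κ ⟨n - 1, by omega⟩ := by
  have hfl0 : 0 ≤ ⌊κ⌋ := Int.floor_nonneg.mpr hκ0.le
  have hm : (⌊κ⌋).toNat < n := by
    have h1 : ⌊κ⌋ < (n : ℤ) := by
      rw [Int.floor_lt]; exact_mod_cast hκn
    omega
  have hfr1 : Int.fract κ < 1 := Int.fract_lt_one κ
  unfold qst
  simp only
  by_cases h0 : (⌊κ⌋).toNat = 0
  · have hfl : ⌊κ⌋ = 0 := by omega
    have hfr : Int.fract κ = κ := by
      have := Int.self_sub_floor κ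
      rw [hfl] at this
      simpa using this.symm
    have h1 : ¬ (0 : ℕ) < (⌊κ⌋).toNat := by omega
    have h2 : (0 : ℕ) = (⌊κ⌋).toNat := h0.symm
    have h3 : ¬ (n - 1 : ℕ) < (⌊κ⌋).toNat := by omega
    have h4 : ¬ (n - 1 : ℕ) = (⌊κ⌋).toNat := by omega
    rw [if_neg h1, if_pos h2, if_neg h3, if_neg h4, hfr, div_self hκ0.ne']
    norm_num
  · have h1 : (0 : ℕ) < (⌊κ⌋).toNat := by omega
    rw [if_pos h1]
    by_cases h2 : (n - 1 : ℕ) = (⌊κ⌋).toNat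
    · have h3 : ¬ (n - 1 : ℕ) < (⌊κ⌋).toNat := by omega
      rw [if_neg h3, if_pos h2]
      intro heq
      rw [div_eq_div_iff hκ0.ne' hκ0.ne'] at heq
      nlinarith
    · have h3 : ¬ (n - 1 : ℕ) < (⌊κ⌋).toNat := by omega
      rw [if_neg h3, if_neg h2]
      exact one_div_ne_zero hκ0.ne'
/-- for the uniform nominal distribution, the CVaR deviation is bounded
by `C_{α,n} √(V_p f)` with `C_{α,n} = √(n(⌊κ⌋ + (κ−⌊κ⌋)²) − κ²)/κ`, `κ = n(1−α)`,
and the bound is tight. -/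
theorem stmt11 (n : ℕ) (hn : 2 ≤ n) (α : ℝ) (hα0 : 0 < α) (hα1 : α < 1) :
    let p : Fin n → ℝ := fun _ => 1 / n
    let κ : ℝ := n * (1 - α)
    let k : ℝ := (⌊κ⌋ : ℝ)
    let C : ℝ := Real.sqrt (n * (k + (κ - k) ^ 2) - κ ^ 2) / κ
    let E : (Fin n → ℝ) → ℝ := fun f => ∑ i, p i * f i
    let V : (Fin n → ℝ) → ℝ := fun f => ∑ i, p i * (f i - E f) ^ 2
    let cvar : (Fin n → ℝ) → ℝ := fun f =>
      sSup ((fun q : Fin n → ℝ => ∑ i, q i * f i) ''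
        {q : Fin n → ℝ | (∑ i, q i = 1 ∧ ∀ i, 0 ≤ q i) ∧ ∀ i, q i ≤ p i / (1 - α)})
    (∀ f : Fin n → ℝ, cvar f - E f ≤ C * Real.sqrt (V f)) ∧
    (∃ f : Fin n → ℝ, (∃ i j, f i ≠ f j) ∧ cvar f - E f = C * Real.sqrt (V f)) := by
  intro p κ k C E V cvar
  simp only [p, κ, k, C, E, V, cvar, Int.self_sub_floor]
  clear p κ k C E V cvar
  have hn0 : 0 < n := by omega
  have hN : (0:ℝ) < n := by exact_mod_cast hn0
  have h1α : 0 < 1 - α := by linarith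
  set N : ℝ := (n : ℝ) with hNdef
  set κ : ℝ := N * (1 - α) with hκdef
  have hκ0 : 0 < κ := by positivity
  have hκn : κ < N := by nlinarith
  set K : ℝ := (⌊κ⌋ : ℝ) with hKdef
  set t : ℝ := Int.fract κ with htdef
  set D : ℝ := N * (K + t ^ 2) - κ ^ 2 with hDdef
  have hcard : ∑ _i : Fin n, (1:ℝ) = N := by simp [Finset.card_univ, hNdef]
  -- the constraint bound rewrite
  have hconstr : ∀ q : Fin n → ℝ, (∀ i, q i ≤ 1 / N / (1 - α)) → (∀ i, q i ≤ 1 / κ) := by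
    intro q hq i
    have := hq i
    rwa [div_div] at this
  have hconstr' : ∀ q : Fin n → ℝ, (∀ i, q i ≤ 1 / κ) → (∀ i, q i ≤ 1 / N / (1 - α)) := by
    intro q hq i
    rw [div_div]
    exact hq i
  -- the feasible set for f
  have hbound : ∀ f : Fin n → ℝ, ∀ x ∈ ((fun q : Fin n → ℝ => ∑ i, q i * f i) ''
      {q : Fin n → ℝ | (∑ i, q i = 1 ∧ ∀ i, 0 ≤ q i) ∧ ∀ i, q i ≤ 1 / N / (1 - α)}),
      x ≤ (∑ i, 1 / N * f i) + Real.sqrt (N * (K + t ^ 2) - κ ^ 2) / κ *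
        Real.sqrt (∑ i, 1 / N * (f i - ∑ j, 1 / N * f j) ^ 2) := by
    rintro f x ⟨q, ⟨⟨hq1, hq0⟩, hqc⟩, rfl⟩
    exact core n hn0 κ hκ0 q f hq1 hq0 (hconstr q hqc)
  have hne : ∀ f : Fin n → ℝ, ((fun q : Fin n → ℝ => ∑ i, q i * f i) ''
      {q : Fin n → ℝ | (∑ i, q i = 1 ∧ ∀ i, 0 ≤ q i) ∧ ∀ i, q i ≤ 1 / N / (1 - α)}).Nonempty := by
    intro f
    refine ⟨∑ i, 1 / N * f i, fun _ => 1 / N, ⟨⟨?_, fun i => by positivity⟩, ?_⟩, rfl⟩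
    · show ∑ _i : Fin n, 1 / N = 1
      rw [show (1:ℝ)/N = 1/N * 1 by ring, ← Finset.mul_sum, hcard]
      field_simp
    · intro i
      rw [div_div]
      show 1 / N ≤ 1 / κ
      apply one_div_le_one_div_of_le hκ0
      nlinarith
  constructor
  · intro f
    rw [sub_le_iff_le_add]
    calc sSup _ ≤ (∑ i, 1 / N * f i) + Real.sqrt D / κ *
          Real.sqrt (∑ i, 1 / N * (f i - ∑ j, 1 / N * f j) ^ 2) :=
          csSup_le (hne f) (hbound f)
      _ = _ := by rw [add_comm]
  · -- tightness
    set f : Fin n → ℝ := fun i => qst n κ i - 1 / N with hfdef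
    have hκn' : κ < (n:ℕ) := hκn
    have hS1 : ∑ i, qst n κ i = 1 := qst_sum n κ hκ0 hκn'
    have hS2 : ∑ i, (qst n κ i) ^ 2 = (K + t ^ 2) / κ ^ 2 := qst_sumsq n κ hκ0 hκn'
    have hEf : ∑ i, 1 / N * f i = 0 := by
      have e : ∀ i ∈ Finset.univ, 1 / N * f i = 1 / N * qst n κ i - (1 / N * (1 / N)) * 1 :=
        fun i _ => by rw [hfdef]; ring
      rw [Finset.sum_congr rfl e, Finset.sum_sub_distrib, ← Finset.mul_sum, ← Finset.mul_sum,
        hS1, hcard]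
      field_simp
      ring
    have hsq : ∑ i, f i ^ 2 = (K + t ^ 2) / κ ^ 2 - 1 / N := by
      have e : ∀ i ∈ Finset.univ, f i ^ 2
          = (qst n κ i) ^ 2 - 2 / N * qst n κ i + (1 / N ^ 2) * 1 := fun i _ => by
        rw [hfdef]; ring
      rw [Finset.sum_congr rfl e, Finset.sum_add_distrib, Finset.sum_sub_distrib,
        ← Finset.mul_sum, ← Finset.mul_sum, hS1, hS2, hcard]
      field_simp
      ring
    have hval : ∑ i, qst n κ i * f i = (K + t ^ 2) / κ ^ 2 - 1 / N := by
      have e : ∀ i ∈ Finset.univ, qst n κ i * f i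
          = (qst n κ i) ^ 2 - (1 / N) * qst n κ i := fun i _ => by rw [hfdef]; ring
      rw [Finset.sum_congr rfl e, Finset.sum_sub_distrib, ← Finset.mul_sum, hS1, hS2]
      ring
    have hDval : (K + t ^ 2) / κ ^ 2 - 1 / N = D / (N * κ ^ 2) := by
      rw [hDdef]; field_simp
    have hD0 : 0 ≤ D := by
      have h1 : 0 ≤ ∑ i, f i ^ 2 := Finset.sum_nonneg fun i _ => sq_nonneg _
      rw [hsq, hDval] at h1
      by_contra hneg
      push_neg at hneg
      have : D / (N * κ ^ 2) < 0 := div_neg_of_neg_of_pos hneg (by positivity)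
      linarith
    have hVf : ∑ i, 1 / N * (f i - ∑ j, 1 / N * f j) ^ 2 = D / (N ^ 2 * κ ^ 2) := by
      simp only [hEf, sub_zero]
      rw [← Finset.mul_sum, hsq, hDval, div_mul_div_comm]
      rw [one_mul]
      congr 1
      ring
    have hCV : Real.sqrt D / κ * Real.sqrt (D / (N ^ 2 * κ ^ 2)) = D / (N * κ ^ 2) := by
      rw [show D / (N ^ 2 * κ ^ 2) = D / (N * κ) ^ 2 by ring_nf,
        Real.sqrt_div hD0, Real.sqrt_sq (by positivity)]
      rw [div_mul_div_comm, Real.mul_self_sqrt hD0]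
      ring
    have hmem : D / (N * κ ^ 2) ∈ ((fun q : Fin n → ℝ => ∑ i, q i * f i) ''
        {q : Fin n → ℝ | (∑ i, q i = 1 ∧ ∀ i, 0 ≤ q i) ∧ ∀ i, q i ≤ 1 / N / (1 - α)}) := by
      refine ⟨qst n κ, ⟨⟨hS1, fun i => qst_nonneg n κ hκ0 i⟩,
        hconstr' _ (fun i => qst_le n κ hκ0 i)⟩, ?_⟩
      show ∑ i, qst n κ i * f i = D / (N * κ ^ 2)
      rw [hval, hDval]
    have hcvar : sSup ((fun q : Fin n → ℝ => ∑ i, q i * f i) ''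
        {q : Fin n → ℝ | (∑ i, q i = 1 ∧ ∀ i, 0 ≤ q i) ∧ ∀ i, q i ≤ 1 / N / (1 - α)})
        = D / (N * κ ^ 2) := by
      apply le_antisymm
      · apply csSup_le (hne f)
        intro x hx
        have := hbound f x hx
        rw [hVf, hEf, hCV] at this
        linarith
      · exact le_csSup ⟨_, hbound f⟩ hmem
    refine ⟨f, ⟨⟨0, by omega⟩, ⟨n - 1, by omega⟩, ?_⟩, ?_⟩
    · have := qst_ne n hn κ hκ0 hκn'
      simp only [hfdef]
      intro h
      exact this (by linarith)
    · rw [hcvar, hVf, hEf, hCV]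
      ring
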